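/- (Abstract reliability–efficiency) In the setting of the semilinear abstract framework, let u be a regular solution to N(u) = 0 with inf-sup constant β > 0 for DN(u), let Q ∈ L(X_h; X) satisfy (H4): ‖x_h − Qx_h‖_{X̂} ≤ Λ₄ dist_{X̂}(x_h, X) for all x_h ∈ X_h. Then any v_h ∈ X_h with ‖u − Qv_h‖_X < β/‖Γ‖ satisfies: (i) ‖u − v_h‖_{X̂} ≤ ‖N(Qv_h)‖_{Y*}/(β − ‖Γ‖·‖u − Qv_h‖_X) + ‖Qv_h − v_h‖_{X̂}; (ii) ‖Qv_h − v_h‖_{X̂} ≤ Λ₄ ‖u − v_h‖_{X̂}; (iii) ‖N(Qv_h)‖_{Y*} ≤ (1+Λ₄)(‖DN(u)‖ + β)·‖u − v_h‖_{X̂}. -/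

import Mathlib

/-!
Statement 6 (Theorem 3.4, abstract reliability–efficiency).
`Xhat` is the superspace X̂ containing the subspaces `X` and `Xd` (= X_h); the quadratic
map is N(x) = Ax − F + Γ(x,x,·) on X with test space Y; `u` is a regular solution with
inf-sup constant β > 0 for DN(u) = A + Γ(u,·,·) + Γ(·,u,·); `Q : X_h → X` satisfies (H4).
The operator norm ‖Γ‖ of the bounded trilinear form is characterised as the least
constant `nΓ` with ‖Γ(x,ξ,·)‖_{Y*} ≤ nΓ‖x‖‖ξ‖.
-/

open Metric

set_option maxHeartbeats 1000000 in
theorem abstract_reliability_efficiency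
    {Xhat Y : Type*} [NormedAddCommGroup Xhat] [NormedSpace ℝ Xhat]
    [NormedAddCommGroup Y] [NormedSpace ℝ Y]
    (X Xd : Submodule ℝ Xhat)
    (A : ↥X →L[ℝ] StrongDual ℝ Y) (F : StrongDual ℝ Y)
    (Γ : ↥X →L[ℝ] ↥X →L[ℝ] StrongDual ℝ Y)
    -- nΓ = ‖Γ‖, the operator norm of the bounded trilinear form Γ
    (nΓ : ℝ)
    (hnΓ : IsLeast {c : ℝ | 0 ≤ c ∧ ∀ x ξ : ↥X, ‖Γ x ξ‖ ≤ c * ‖x‖ * ‖ξ‖} nΓ)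
    (u : ↥X)
    (hu : A u + Γ u u = F)                       -- N(u) = 0
    (β : ℝ) (hβ : 0 < β)
    (hinfsup : ∀ x : ↥X, β * ‖x‖ ≤ ‖A x + Γ u x + Γ.flip u x‖)
    (Q : ↥Xd →L[ℝ] ↥X) (Λ₄ : ℝ) (hΛ₄ : 0 ≤ Λ₄)
    -- (H4)
    (H4 : ∀ xh : ↥Xd,
      ‖(xh : Xhat) - ((Q xh : ↥X) : Xhat)‖ ≤ Λ₄ * infDist (xh : Xhat) (X : Set Xhat))
    (vh : ↥Xd) (hclose : ‖u - Q vh‖ < β / nΓ) :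
    -- (3.11) reliability
    (‖(u : Xhat) - (vh : Xhat)‖ ≤
        ‖A (Q vh) + Γ (Q vh) (Q vh) - F‖ / (β - nΓ * ‖u - Q vh‖) +
          ‖((Q vh : ↥X) : Xhat) - (vh : Xhat)‖) ∧
    -- (3.12)
    (‖((Q vh : ↥X) : Xhat) - (vh : Xhat)‖ ≤ Λ₄ * ‖(u : Xhat) - (vh : Xhat)‖) ∧
    -- (3.13) efficiency
    (‖A (Q vh) + Γ (Q vh) (Q vh) - F‖ ≤
        (1 + Λ₄) * (‖A + Γ u + Γ.flip u‖ + β) * ‖(u : Xhat) - (vh : Xhat)‖) := by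
  obtain ⟨⟨hnΓ0, hΓb⟩, -⟩ := hnΓ
  have hnΓpos : 0 < nΓ := by
    rcases hnΓ0.lt_or_eq with h | h
    · exact h
    · exfalso
      rw [← h, div_zero] at hclose
      exact absurd hclose (not_lt.mpr (norm_nonneg _))
  have hmul : nΓ * ‖u - Q vh‖ < β := by
    have := (lt_div_iff₀ hnΓpos).mp hclose
    linarith [this]
  set w : ↥X := Q vh - u with hw
  have hQw : (Q vh : ↥X) = u + w := by rw [hw]; abel
  have hnw : ‖w‖ = ‖u - Q vh‖ := by rw [hw, ← norm_neg]; congr 1; abel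
  -- key algebraic identity
  have key : A (Q vh) + Γ (Q vh) (Q vh) - F
      = (A w + Γ u w + Γ.flip u w) + Γ w w := by
    rw [hQw, ← hu]
    simp only [map_add, ContinuousLinearMap.add_apply, ContinuousLinearMap.flip_apply]
    abel
  set R : StrongDual ℝ Y := A (Q vh) + Γ (Q vh) (Q vh) - F with hR
  have hΓww : ‖Γ w w‖ ≤ nΓ * ‖w‖ * ‖w‖ := hΓb w w
  -- inf-sup estimate
  have hmain : (β - nΓ * ‖u - Q vh‖) * ‖w‖ ≤ ‖R‖ := by
    have h1 : β * ‖w‖ ≤ ‖A w + Γ u w + Γ.flip u w‖ := hinfsup w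
    have h2 : ‖A w + Γ u w + Γ.flip u w‖ ≤ ‖R‖ + ‖Γ w w‖ := by
      have : A w + Γ u w + Γ.flip u w = R - Γ w w := by rw [key]; abel
      rw [this]
      exact norm_sub_le _ _
    rw [← hnw]
    have expand : (β - nΓ * ‖w‖) * ‖w‖ = β * ‖w‖ - nΓ * ‖w‖ * ‖w‖ := by ring
    rw [expand]
    linarith [h1, h2, hΓww]
  have hβsub : 0 < β - nΓ * ‖u - Q vh‖ := by linarith
  have hwle : ‖w‖ ≤ ‖R‖ / (β - nΓ * ‖u - Q vh‖) :=
    (le_div_iff₀ hβsub).mpr (by linarith [hmain])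
  -- norms in Xhat vs X
  have hcoe : ∀ x : ↥X, ‖x‖ = ‖(x : Xhat)‖ := fun x => rfl
  have hwXhat : ‖w‖ = ‖((Q vh : ↥X) : Xhat) - (u : Xhat)‖ := by
    rw [hcoe w, hw]; norm_cast
  -- (3.12)
  have h312 : ‖((Q vh : ↥X) : Xhat) - (vh : Xhat)‖ ≤ Λ₄ * ‖(u : Xhat) - (vh : Xhat)‖ := by
    have h4 := H4 vh
    have hd : infDist (vh : Xhat) (X : Set Xhat) ≤ ‖(u : Xhat) - (vh : Xhat)‖ := by
      have := infDist_le_dist_of_mem (x := (vh : Xhat)) (SetLike.coe_mem u)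
      rwa [dist_eq_norm, norm_sub_rev] at this
    calc ‖((Q vh : ↥X) : Xhat) - (vh : Xhat)‖
        = ‖(vh : Xhat) - ((Q vh : ↥X) : Xhat)‖ := (norm_sub_rev _ _).symm
      _ ≤ Λ₄ * infDist (vh : Xhat) (X : Set Xhat) := h4
      _ ≤ Λ₄ * ‖(u : Xhat) - (vh : Xhat)‖ := by
          exact mul_le_mul_of_nonneg_left hd hΛ₄
  refine ⟨?_, h312, ?_⟩
  · -- (3.11)
    calc ‖(u : Xhat) - (vh : Xhat)‖
        ≤ ‖(u : Xhat) - ((Q vh : ↥X) : Xhat)‖ + ‖((Q vh : ↥X) : Xhat) - (vh : Xhat)‖ :=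
          norm_sub_le_norm_sub_add_norm_sub _ _ _
      _ ≤ ‖R‖ / (β - nΓ * ‖u - Q vh‖) + ‖((Q vh : ↥X) : Xhat) - (vh : Xhat)‖ := by
          have : ‖(u : Xhat) - ((Q vh : ↥X) : Xhat)‖ = ‖w‖ := by
            rw [hwXhat, norm_sub_rev]
          rw [this]
          exact add_le_add_left hwle _
  · -- (3.13)
    have hDN : ‖A w + Γ u w + Γ.flip u w‖ ≤ ‖A + Γ u + Γ.flip u‖ * ‖w‖ := by
      have := (A + Γ u + Γ.flip u).le_opNorm w
      simpa using this
    have hNbd : ‖R‖ ≤ (‖A + Γ u + Γ.flip u‖ + β) * ‖w‖ := by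
      have h1 : ‖R‖ ≤ ‖A w + Γ u w + Γ.flip u w‖ + ‖Γ w w‖ := by
        rw [key]; exact norm_add_le _ _
      have h2 : nΓ * ‖w‖ * ‖w‖ ≤ β * ‖w‖ := by
        rw [hnw]
        exact mul_le_mul_of_nonneg_right hmul.le (norm_nonneg _)
      have expand : (‖A + Γ u + Γ.flip u‖ + β) * ‖w‖
          = ‖A + Γ u + Γ.flip u‖ * ‖w‖ + β * ‖w‖ := by ring
      rw [expand]
      linarith [h1, hΓww, h2, hDN]
    have hwbd : ‖w‖ ≤ (1 + Λ₄) * ‖(u : Xhat) - (vh : Xhat)‖ := by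
      have : ‖w‖ ≤ ‖((Q vh : ↥X) : Xhat) - (vh : Xhat)‖ + ‖(vh : Xhat) - (u : Xhat)‖ := by
        rw [hwXhat]; exact norm_sub_le_norm_sub_add_norm_sub _ _ _
      rw [norm_sub_rev (vh : Xhat) (u : Xhat)] at this
      have expand : (1 + Λ₄) * ‖(u : Xhat) - (vh : Xhat)‖
          = ‖(u : Xhat) - (vh : Xhat)‖ + Λ₄ * ‖(u : Xhat) - (vh : Xhat)‖ := by ring
      rw [expand]
      linarith [h312]
    have hDNβ : 0 ≤ ‖A + Γ u + Γ.flip u‖ + β := add_nonneg (ContinuousLinearMap.opNorm_nonneg _) hβ.le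
    calc ‖R‖ ≤ (‖A + Γ u + Γ.flip u‖ + β) * ‖w‖ := hNbd
      _ ≤ (‖A + Γ u + Γ.flip u‖ + β) * ((1 + Λ₄) * ‖(u : Xhat) - (vh : Xhat)‖) :=
          mul_le_mul_of_nonneg_left hwbd hDNβ
      _ = (1 + Λ₄) * (‖A + Γ u + Γ.flip u‖ + β) * ‖(u : Xhat) - (vh : Xhat)‖ := by ring
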